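/- Let A, U be independent mean-zero L² random variables with variances v_A, v_U > 0, and nonzero reals α, β, γ, η with X = α·A + β·U and Y = γ·U + η·A. Then the least-squares predictor of Y on (X, A) has coefficients λ_X = γ/β and λ_A = η − αγ/β, and its counterfactual value at (α·a' + β·u, a') equals γ·u + η·a', which is non-constant in a'; hence the predictor is not counterfactually fair. -/

import Mathlib

open MeasureTheory ProbabilityTheory

theorem stmt_7 {Ω : Type*} [MeasureSpace Ω] [IsProbabilityMeasure (ℙ : Measure Ω)]
    (A U : Ω → ℝ) (hA2 : MemLp A 2) (hU2 : MemLp U 2)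
    (hInd : IndepFun A U ℙ)
    (hmA : ∫ ω, A ω = 0) (hmU : ∫ ω, U ω = 0)
    (vA vU : ℝ) (hvA : variance A ℙ = vA) (hvU : variance U ℙ = vU)
    (hvA0 : 0 < vA) (hvU0 : 0 < vU)
    (α β γ η : ℝ) (hα : α ≠ 0) (hβ : β ≠ 0) (hγ : γ ≠ 0) (hη : η ≠ 0)
    (X Y : Ω → ℝ)
    (hX : ∀ ω, X ω = α * A ω + β * U ω) (hY : ∀ ω, Y ω = γ * U ω + η * A ω)
    (lamX lamA : ℝ) (hlamX : lamX = γ / β) (hlamA : lamA = η - α * γ / β) :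
    -- (lamX, lamA) are the least-squares coefficients of Y on (X, A)
    (∀ lX lA : ℝ,
        (∫ ω, (Y ω - lamX * X ω - lamA * A ω) ^ 2) ≤
          ∫ ω, (Y ω - lX * X ω - lA * A ω) ^ 2) ∧
      -- counterfactual value under A ← a' with background u
      (∀ (u a' : ℝ), lamX * (α * a' + β * u) + lamA * a' = γ * u + η * a') ∧
      -- non-constant in a', hence not counterfactually fair
      (∀ (u a a' : ℝ), a ≠ a' →
        lamX * (α * a + β * u) + lamA * a ≠ lamX * (α * a' + β * u) + lamA * a') := by
  have hzero : ∀ ω, Y ω - lamX * X ω - lamA * A ω = 0 := by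
    intro ω
    rw [hX, hY, hlamX, hlamA]
    field_simp
    ring
  refine ⟨?_, ?_, ?_⟩
  · intro lX lA
    have h1 : (∫ ω, (Y ω - lamX * X ω - lamA * A ω) ^ 2) = 0 := by
      simp [hzero]
    rw [h1]
    exact integral_nonneg fun ω => sq_nonneg _
  · intro u a'
    rw [hlamX, hlamA]
    field_simp
    ring
  · intro u a a' hne
    have h2 : ∀ b : ℝ, lamX * (α * b + β * u) + lamA * b = γ * u + η * b := by
      intro b; rw [hlamX, hlamA]; field_simp; ring
    rw [h2, h2]
    intro h
    exact hne (mul_left_cancel₀ hη (by linarith))
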